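/- Let G be a 2-connected graph with a 2-cut {x,y} separating G into parts H_1 and H_2 (each H_i is induced on a component of G−{x,y} together with x,y). If H_1−xy contains two x–y paths whose lengths differ by 2, and H_2−xy is non-bipartite and 2-connected after adding xy, then G contains two cycles of consecutive even lengths. -/

import Mathlib

open SimpleGraph

/-- `G` contains two cycles of consecutive even lengths `2m` and `2m+2`. -/
def HasTwoConsecEvenCycles {V : Type*} (G : SimpleGraph V) : Prop :=
  ∃ (u v : V) (c₁ : G.Walk u u) (c₂ : G.Walk v v) (m : ℕ),
    c₁.IsCycle ∧ c₂.IsCycle ∧ 0 < m ∧ c₁.length = 2 * m ∧ c₂.length = 2 * m + 2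

/-- `G` is `k`-connected: more than `k` vertices, and deleting any set of
fewer than `k` vertices leaves a connected graph. -/
def KConnected {V : Type*} (k : ℕ) (G : SimpleGraph V) : Prop :=
  k + 1 ≤ Nat.card V ∧ ∀ S : Set V, S.ncard < k → (G.induce Sᶜ).Connected


section Aux

open SimpleGraph Walk

variable {W : Type*}

def MHyp (G : SimpleGraph W) (X Y : Set W) : Prop :=
  ∀ S : Set W, S.ncard ≤ 1 →
    ∃ (a b : W) (w : G.Walk a b), a ∈ X ∧ b ∈ Y ∧ ∀ x ∈ w.support, x ∉ S

def TwoPaths (G : SimpleGraph W) (X Y : Set W) : Prop :=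
  ∃ (a₁ b₁ a₂ b₂ : W) (w₁ : G.Walk a₁ b₁) (w₂ : G.Walk a₂ b₂),
    w₁.IsPath ∧ w₂.IsPath ∧ a₁ ∈ X ∧ b₁ ∈ Y ∧ a₂ ∈ X ∧ b₂ ∈ Y ∧
    (∀ x ∈ w₁.support, (x ∈ X → x = a₁) ∧ (x ∈ Y → x = b₁)) ∧
    (∀ x ∈ w₂.support, (x ∈ X → x = a₂) ∧ (x ∈ Y → x = b₂)) ∧
    (∀ x ∈ w₁.support, x ∉ w₂.support)


variable {G : SimpleGraph W}

/-- First-hit truncation of a walk at a set `S`. -/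
lemma exists_trunc' {S : Set W} :
    ∀ {a b : W} (p : G.Walk a b), (∃ m ∈ p.support, m ∈ S) →
    ∃ (c : W) (q : G.Walk a c), c ∈ S ∧ (∀ v ∈ q.support, v ∈ S → v = c) ∧
      (∀ v ∈ q.support, v ∈ p.support) ∧ (∀ e ∈ q.edges, e ∈ p.edges) := by
  intro a b p
  induction p with
  | nil =>
    rintro ⟨m, hm, hmS⟩
    simp only [support_nil, List.mem_singleton] at hm
    subst hm
    exact ⟨_, .nil, hmS, by simp, by simp, by simp⟩
  | @cons u v b h p ih =>
    rintro ⟨m, hm, hmS⟩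
    by_cases huS : u ∈ S
    · exact ⟨u, .nil, huS, by simp, by simp, by simp⟩
    · have hm' : m ∈ p.support := by
        rcases (by simpa using hm : m = u ∨ m ∈ p.support) with rfl | h'
        · exact absurd hmS huS
        · exact h'
      obtain ⟨c, q, hcS, hq1, hq2, hq3⟩ := ih ⟨m, hm', hmS⟩
      refine ⟨c, .cons h q, hcS, ?_, ?_, ?_⟩
      · intro x hx hxS
        rcases (by simpa using hx : x = u ∨ x ∈ q.support) with rfl | h'
        · exact absurd hxS huS
        · exact hq1 x h' hxS
      · intro x hx
        rcases (by simpa using hx : x = u ∨ x ∈ q.support) with rfl | h'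
        · simp
        · simp [hq2 x h']
      · intro e he
        rcases (by simpa using he : e = s(u, v) ∨ e ∈ q.edges) with rfl | h'
        · simp
        · simp [hq3 e h']


lemma exists_trim {X Y : Set W} {a b : W} (w : G.Walk a b) (ha : a ∈ X) (hb : b ∈ Y) :
    ∃ (a' b' : W) (w' : G.Walk a' b'), a' ∈ X ∧ b' ∈ Y ∧
      (∀ v ∈ w'.support, v ∈ X → v = a') ∧ (∀ v ∈ w'.support, v ∈ Y → v = b') ∧
      (∀ v ∈ w'.support, v ∈ w.support) := by
  obtain ⟨c, q, hcY, hq1, hq2, -⟩ := exists_trunc' w ⟨b, w.end_mem_support, hb⟩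
  obtain ⟨a', q₂, ha'X, hq₂1, hq₂2, -⟩ :=
    exists_trunc' q.reverse ⟨a, by simp [Walk.support_reverse], ha⟩
  refine ⟨a', c, q₂.reverse, ha'X, hcY, ?_, ?_, ?_⟩
  · intro v hv hvX
    exact hq₂1 v (by simpa [Walk.support_reverse] using hv) hvX
  · intro v hv hvY
    refine hq1 v ?_ hvY
    have := hq₂2 v (by simpa [Walk.support_reverse] using hv)
    simpa [Walk.support_reverse] using this
  · intro v hv
    refine hq2 v ?_
    have := hq₂2 v (by simpa [Walk.support_reverse] using hv)
    simpa [Walk.support_reverse] using this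

lemma glue_cycle {x y : W} (p r : G.Walk x y) (hp : p.IsPath) (hr : r.IsPath)
    (hxy : x ≠ y)
    (hsup : ∀ v, v ∈ p.support → v ∈ r.support → v = x ∨ v = y)
    (hedge : ∀ e ∈ p.edges, e ∉ r.edges) :
    (p.append r.reverse).IsCycle := by
  have hpnodup := hp.support_nodup
  have hrrev : r.reverse.IsPath := hr.reverse
  refine ⟨⟨?_, ?_⟩, ?_⟩
  · -- IsTrail
    constructor
    rw [Walk.edges_append]
    refine List.Nodup.append hp.isTrail.edges_nodup hrrev.isTrail.edges_nodup ?_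
    intro e he he'
    exact hedge e he (by simpa [Walk.edges_reverse] using he')
  · -- ne nil
    intro h
    have : (p.append r.reverse).length = 0 := by rw [h]; rfl
    rw [Walk.length_append] at this
    have hp0 : p.length = 0 := by omega
    exact hxy (Walk.eq_of_length_eq_zero hp0)
  · -- support tail nodup
    have hsupp : (p.append r.reverse).support.tail
        = p.support.tail ++ r.reverse.support.tail := by
      rw [Walk.support_append, p.support_eq_cons]
      simp
    rw [hsupp]
    refine List.Nodup.append (hpnodup.tail) (hrrev.support_nodup.tail) ?_
    intro v hv hv'
    have hvp : v ∈ p.support := List.mem_of_mem_tail hv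
    have hvr : v ∈ r.support := by
      have := List.mem_of_mem_tail hv'
      simpa [Walk.support_reverse] using this
    rcases hsup v hvp hvr with rfl | rfl
    · have : v ∉ p.support.tail := by
        have := hpnodup
        rw [p.support_eq_cons] at this
        exact (List.nodup_cons.mp this).1
      exact this hv
    · have : v ∉ r.reverse.support.tail := by
        have := hrrev.support_nodup
        rw [r.reverse.support_eq_cons] at this
        exact (List.nodup_cons.mp this).1
      exact this hv'


lemma takeUntil_avoid [DecidableEq W] {a b : W} (α : G.Walk a b) (hα : α.IsPath) {w : W}
    (hw : w ∈ α.support) (hwb : w ≠ b) : b ∉ (α.takeUntil w hw).support := by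
  intro hb
  have hspec := α.take_spec hw
  have hnodup := hα.support_nodup
  rw [← hspec, Walk.support_append] at hnodup
  have hdisj := List.disjoint_of_nodup_append hnodup
  refine hdisj hb ?_
  have : b ∈ (α.dropUntil w hw).support := Walk.end_mem_support _
  rw [(α.dropUntil w hw).support_eq_cons] at this
  rcases List.mem_cons.mp this with h | h
  · exact absurd h hwb.symm
  · exact h

lemma dropUntil_avoid [DecidableEq W] {c d : W} (β : G.Walk c d) (hβ : β.IsPath) {w : W}
    (hw : w ∈ β.support) (hwc : w ≠ c) : c ∉ (β.dropUntil w hw).support := by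
  intro hc
  have hspec := β.take_spec hw
  have hnodup := hβ.support_nodup
  rw [← hspec, Walk.support_append] at hnodup
  have hdisj := List.disjoint_of_nodup_append hnodup
  have hcmem : c ∈ (β.takeUntil w hw).support := Walk.start_mem_support _
  refine hdisj hcmem ?_
  rw [(β.dropUntil w hw).support_eq_cons] at hc
  rcases List.mem_cons.mp hc with h | h
  · exact absurd h.symm hwc
  · exact h

/-- If `s` separates `X` from `Y` in `G'`, then two "proper" paths on the two sides of `s`
can only meet at `s`. -/
lemma cross_lemma [DecidableEq W] {G' : SimpleGraph W} {X Y : Set W} {s : W}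
    (hSep : ∀ (a b : W) (w : G'.Walk a b), a ∈ X → b ∈ Y → s ∈ w.support)
    {a b c d w : W} (α : G'.Walk a b) (β : G'.Walk c d)
    (hα : α.IsPath) (hβ : β.IsPath) (haX : a ∈ X) (hdY : d ∈ Y)
    (hsα : s ∈ α.support → s = b) (hsβ : s ∈ β.support → s = c)
    (hwα : w ∈ α.support) (hwβ : w ∈ β.support) : w = s := by
  by_contra hws
  have hcomb := hSep a d ((α.takeUntil w hwα).append (β.dropUntil w hwβ)) haX hdY
  rw [Walk.mem_support_append_iff] at hcomb
  rcases hcomb with hs | hs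
  · have hsb : s = b := hsα (Walk.support_takeUntil_subset _ _ hs)
    by_cases hwb : w = b
    · exact hws (hwb.trans hsb.symm)
    · exact takeUntil_avoid α hα hwα hwb (hsb ▸ hs)
  · have hsc : s = c := hsβ (Walk.support_dropUntil_subset _ _ hs)
    by_cases hwc : w = c
    · exact hws (hwc.trans hsc.symm)
    · exact dropUntil_avoid β hβ hwβ hwc (hsc ▸ hs)


lemma path_edge_length {a b : W} (q : G.Walk a b) (hq : q.IsPath)
    (hab : s(a, b) ∈ q.edges) : q.length = 1 := by
  induction q with
  | nil => simp at hab
  | @cons a c b h' q' ih =>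
    rw [Walk.edges_cons, List.mem_cons] at hab
    rcases hab with heq | hmem
    · have : b = c := Sym2.congr_right.mp heq
      subst this
      have : q' = Walk.nil := Walk.isPath_iff_eq_nil.mp hq.of_cons
      simp [this]
    · exact absurd (Walk.fst_mem_support_of_mem_edges q' hmem)
        ((Walk.cons_isPath_iff h' q').mp hq).2

lemma exists_odd_cycle_aux :
    ∀ (n : ℕ), Odd n → ∀ {u : W} (c : G.Walk u u), c.length = n →
    ∃ (w : W) (d : G.Walk w w), d.IsCycle ∧ Odd d.length := by
  intro n
  induction n using Nat.strong_induction_on with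
  | _ n ih =>
  intro hodd u c hlen
  classical
  by_cases hnodup : c.support.tail.Nodup
  · cases c with
    | nil => simp at hlen; subst hlen; simp [Nat.odd_iff] at hodd
    | @cons u v w h p =>
      have hp : p.IsPath := by
        rw [Walk.isPath_def]
        simpa using hnodup
      have hne : s(u, v) ∉ p.edges := by
        intro hmem
        have h1 : p.length = 1 := by
          apply path_edge_length p hp
          rwa [Sym2.eq_swap]
        rw [Walk.length_cons, h1] at hlen
        subst hlen
        simp [Nat.odd_iff] at hodd
      exact ⟨u, Walk.cons h p, (Walk.cons_isCycle_iff p h).mpr ⟨hp, hne⟩,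
        by rw [hlen]; exact hodd⟩
  · obtain ⟨v, hdup⟩ := List.exists_duplicate_iff_not_nodup.mpr hnodup
    have hcount : 2 ≤ c.support.tail.count v := List.duplicate_iff_two_le_count.mp hdup
    have hv : v ∈ c.support := List.mem_of_mem_tail hdup.mem
    set c' := c.rotate v hv with hc'
    have hlen' : c'.length = n := by
      rw [hc', Walk.rotate, Walk.length_append, Nat.add_comm, ← Walk.length_append,
        Walk.take_spec, hlen]
    have hcount' : 2 ≤ c'.support.tail.count v := by
      have := (Walk.support_rotate c v hv).perm.count_eq v
      rw [← hc'] at this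
      omega
    cases hc'' : c' with
    | nil =>
      rw [hc''] at hlen'; simp at hlen'; subst hlen'; simp [Nat.odd_iff] at hodd
    | @cons a z b h d =>
      rw [hc''] at hcount' hlen'
      rw [Walk.support_cons] at hcount'
      simp only [List.tail_cons] at hcount'
      have hvd : v ∈ d.support := by
        have : 0 < d.support.count v := by omega
        exact List.count_pos_iff.mp this
      set tk := d.takeUntil v hvd with htk
      set dr := d.dropUntil v hvd with hdr
      have hspec : tk.append dr = d := Walk.take_spec d hvd
      have hlens : tk.length + dr.length = d.length := by
        have := congrArg Walk.length hspec
        rwa [Walk.length_append] at this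
      have hdrne : 1 ≤ dr.length := by
        by_contra h0
        have hdr0 : dr.length = 0 := by omega
        have hsup : d.support = tk.support ++ dr.support.tail := by
          rw [← hspec, Walk.support_append]
        have htl : dr.support.tail = [] := by
          apply List.eq_nil_of_length_eq_zero
          rw [List.length_tail, Walk.length_support, hdr0]
        rw [htl, List.append_nil] at hsup
        have := Walk.count_support_takeUntil_eq_one d hvd
        rw [← htk] at this
        rw [hsup] at hcount'
        omega
      have hsum : (tk.length + 1) + dr.length = n := by
        rw [Walk.length_cons] at hlen'
        omega
      have hor : Odd (Walk.cons h tk).length ∨ Odd dr.length := by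
        rw [Nat.odd_iff] at hodd ⊢
        rw [Nat.odd_iff]
        rw [Walk.length_cons]
        omega
      rcases hor with ho | ho
      · exact ih (Walk.cons h tk).length (by rw [Walk.length_cons]; omega) ho _ rfl
      · exact ih dr.length (by omega) ho _ rfl

lemma colorable_two_of_even_closed (G : SimpleGraph W)
    (h : ∀ (u : W) (c : G.Walk u u), Even c.length) : G.Colorable 2 := by
  classical
  have hwalk : ∀ v : W, Nonempty (G.Walk (Quot.out (G.connectedComponentMk v)) v) := by
    intro v
    exact (ConnectedComponent.exact (Quot.out_eq (G.connectedComponentMk v)))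
  refine ⟨Coloring.mk (fun v => ⟨(hwalk v).some.length % 2, by omega⟩) ?_⟩
  intro u v hadj hc
  have hroot : Quot.out (G.connectedComponentMk u) = Quot.out (G.connectedComponentMk v) :=
    congrArg Quot.out (ConnectedComponent.connectedComponentMk_eq_of_adj hadj)
  set wu := (hwalk u).some with hwu
  set wv := (hwalk v).some with hwv
  have hcl : Even (wu.append (Walk.cons hadj ((wv.copy hroot.symm rfl).reverse))).length :=
    h _ _
  rw [Walk.length_append, Walk.length_cons, Walk.length_reverse, Walk.length_copy] at hcl
  have h2 : wu.length % 2 = wv.length % 2 := congrArg Fin.val hc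
  rw [Nat.even_iff] at hcl
  omega

lemma exists_odd_cycle (hn : ¬ G.Colorable 2) :
    ∃ (w : W) (d : G.Walk w w), d.IsCycle ∧ Odd d.length := by
  by_contra h
  refine hn (colorable_two_of_even_closed G ?_)
  intro u c
  by_contra hodd
  rw [Nat.not_even_iff_odd] at hodd
  exact h (exists_odd_cycle_aux c.length (by rwa [Nat.odd_iff] at hodd ⊢) c rfl)


lemma not_edge_of_support_left {u v a b : W} {w : G.Walk a b} (h : u ∉ w.support) :
    s(u, v) ∉ w.edges := fun he => h (w.fst_mem_support_of_mem_edges he)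

lemma walk_toDel {u v a b : W} (w : G.Walk a b) (h : s(u, v) ∉ w.edges) :
    ∀ e ∈ w.edges, e ∈ (G.deleteEdges {s(u, v)}).edgeSet := by
  intro e he
  rw [edgeSet_deleteEdges]
  refine ⟨w.edges_subset_edgeSet he, ?_⟩
  simp only [Set.mem_singleton_iff]
  rintro rfl
  exact h he

lemma walk_fromDel {u v a b : W} (w : (G.deleteEdges {s(u, v)}).Walk a b) :
    ∀ e ∈ w.edges, e ∈ G.edgeSet := by
  intro e he
  have := w.edges_subset_edgeSet he
  rw [edgeSet_deleteEdges] at this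
  exact this.1

lemma menger_core [DecidableEq W] (G : SimpleGraph W) (X Y : Set W) (u v s : W)
    (hadj : G.Adj u v) (hsu : s ≠ u) (hsv : s ≠ v)
    (IH : ∀ X' Y' : Set W, MHyp (G.deleteEdges {s(u, v)}) X' Y' →
      TwoPaths (G.deleteEdges {s(u, v)}) X' Y')
    (hSep : ∀ (a b : W) (w : (G.deleteEdges {s(u, v)}).Walk a b),
      a ∈ X → b ∈ Y → s ∈ w.support)
    (hglob : MHyp G X Y)
    (a₀ : W) (ha₀ : a₀ ∈ X) (ρ : (G.deleteEdges {s(u, v)}).Walk a₀ u)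
    (hρs : s ∉ ρ.support) :
    TwoPaths G X Y := by
  classical
  -- get σ : v → Y in G' avoiding s
  obtain ⟨ag, bg, π₂, hagX, hbgY, hπ₂s⟩ := hglob {s} (by simp)
  have hπ₂s' : s ∉ π₂.support := fun hx => hπ₂s s hx rfl
  have he₂ : s(u, v) ∈ π₂.edges := by
    by_contra he
    have := hSep ag bg (π₂.transfer _ (walk_toDel π₂ he)) hagX hbgY
    rw [Walk.support_transfer] at this
    exact hπ₂s' this
  have hvmem : v ∈ π₂.reverse.support := by
    rw [Walk.support_reverse, List.mem_reverse]
    exact π₂.snd_mem_support_of_mem_edges he₂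
  obtain ⟨w₀, τ, hw₀, hτprop, hτsub, hτedges⟩ :=
    exists_trunc' (S := {u, v}) π₂.reverse ⟨v, hvmem, by simp⟩
  have hτe : s(u, v) ∉ τ.edges := by
    intro he
    have h1 := hτprop u (τ.fst_mem_support_of_mem_edges he) (by simp)
    have h2 := hτprop v (τ.snd_mem_support_of_mem_edges he) (by simp)
    exact hadj.ne (h1.trans h2.symm)
  have hτs : s ∉ τ.support := by
    intro hs
    have := hτsub s hs
    rw [Walk.support_reverse, List.mem_reverse] at this
    exact hπ₂s' this
  have hw₀v : w₀ = v := by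
    rcases (by simpa using hw₀ : w₀ = u ∨ w₀ = v) with rfl | rfl
    · exfalso
      have := hSep a₀ bg (ρ.append (τ.transfer _ (walk_toDel τ hτe)).reverse) ha₀ hbgY
      rw [Walk.mem_support_append_iff] at this
      rcases this with hs | hs
      · exact hρs hs
      · rw [Walk.support_reverse, List.mem_reverse, Walk.support_transfer] at hs
        exact hτs hs
    · rfl
  set σ : (G.deleteEdges {s(u, v)}).Walk v bg :=
    ((τ.copy rfl hw₀v).transfer _ (walk_toDel _ (by rwa [Walk.edges_copy]))).reverse
    with hσdef
  have hσs : s ∉ σ.support := by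
    rw [hσdef, Walk.support_reverse, List.mem_reverse, Walk.support_transfer,
      Walk.support_copy]
    exact hτs
  -- IH₁ : X vs {s,u}
  have hIH₁ : MHyp (G.deleteEdges {s(u, v)}) X ({s, u} : Set W) := by
    intro R hR
    obtain ⟨aR, bR, πR, haR, hbR, hπR⟩ := hglob R hR
    by_cases hmeet : ∃ m ∈ πR.support, m ∈ ({s, u, v} : Set W)
    · obtain ⟨c, τ₁, hc, hprop, hsub, hedgesub⟩ := exists_trunc' πR hmeet
      have hτ₁e : s(u, v) ∉ τ₁.edges := by
        intro he
        have h1 := hprop u (τ₁.fst_mem_support_of_mem_edges he) (by simp)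
        have h2 := hprop v (τ₁.snd_mem_support_of_mem_edges he) (by simp)
        exact hadj.ne (h1.trans h2.symm)
      have hτ₁R : ∀ x ∈ τ₁.support, x ∉ R := fun x hx => hπR x (hsub x hx)
      rcases (by simpa using hc : c = s ∨ c = u ∨ c = v) with rfl | rfl | rfl
      · exact ⟨aR, c, τ₁.transfer _ (walk_toDel τ₁ hτ₁e), haR, by simp,
          by rw [Walk.support_transfer]; exact hτ₁R⟩
      · exact ⟨aR, c, τ₁.transfer _ (walk_toDel τ₁ hτ₁e), haR, by simp,
          by rw [Walk.support_transfer]; exact hτ₁R⟩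
      · exfalso
        have := hSep aR bg ((τ₁.transfer _ (walk_toDel τ₁ hτ₁e)).append σ) haR hbgY
        rw [Walk.mem_support_append_iff] at this
        rcases this with hs | hs
        · rw [Walk.support_transfer] at hs
          exact hsv (hprop s hs (by simp))
        · exact hσs hs
    · exfalso
      have hu' : u ∉ πR.support := fun h => hmeet ⟨u, h, by simp⟩
      have := hSep aR bR
        (πR.transfer _ (walk_toDel πR (not_edge_of_support_left hu'))) haR hbR
      rw [Walk.support_transfer] at this
      exact hmeet ⟨s, this, by simp⟩
  -- IH₂ : {s,v} vs Y
  have hIH₂ : MHyp (G.deleteEdges {s(u, v)}) ({s, v} : Set W) Y := by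
    intro R hR
    obtain ⟨aR, bR, πR, haR, hbR, hπR⟩ := hglob R hR
    by_cases hmeet : ∃ m ∈ πR.reverse.support, m ∈ ({s, u, v} : Set W)
    · obtain ⟨c, τ₂, hc, hprop, hsub, hedgesub⟩ := exists_trunc' πR.reverse hmeet
      have hτ₂e : s(u, v) ∉ τ₂.edges := by
        intro he
        have h1 := hprop u (τ₂.fst_mem_support_of_mem_edges he) (by simp)
        have h2 := hprop v (τ₂.snd_mem_support_of_mem_edges he) (by simp)
        exact hadj.ne (h1.trans h2.symm)
      have hτ₂R : ∀ x ∈ τ₂.support, x ∉ R := fun x hx => by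
        have := hsub x hx
        rw [Walk.support_reverse, List.mem_reverse] at this
        exact hπR x this
      have hτ₂Rrev : ∀ x ∈ (τ₂.transfer _ (walk_toDel τ₂ hτ₂e)).reverse.support, x ∉ R := by
        intro x hx
        rw [Walk.support_reverse, List.mem_reverse, Walk.support_transfer] at hx
        exact hτ₂R x hx
      rcases (by simpa using hc : c = s ∨ c = u ∨ c = v) with hceq | hceq | hceq
      · exact ⟨c, bR, (τ₂.transfer _ (walk_toDel τ₂ hτ₂e)).reverse, by simp [hceq], hbR,
          hτ₂Rrev⟩
      · exfalso
        have := hSep a₀ bR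
          (ρ.append ((τ₂.copy rfl hceq).transfer _
            (walk_toDel _ (by rwa [Walk.edges_copy]))).reverse) ha₀ hbR
        rw [Walk.mem_support_append_iff] at this
        rcases this with hs | hs
        · exact hρs hs
        · rw [Walk.support_reverse, List.mem_reverse, Walk.support_transfer,
            Walk.support_copy] at hs
          exact hsu ((hprop s hs (by simp)).trans hceq)
      · exact ⟨c, bR, (τ₂.transfer _ (walk_toDel τ₂ hτ₂e)).reverse, by simp [hceq], hbR,
          hτ₂Rrev⟩
    · exfalso
      have hu' : u ∉ πR.support := fun h => hmeet ⟨u, by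
        rw [Walk.support_reverse, List.mem_reverse]; exact h, by simp⟩
      have := hSep aR bR
        (πR.transfer _ (walk_toDel πR (not_edge_of_support_left hu'))) haR hbR
      rw [Walk.support_transfer] at this
      refine hmeet ⟨s, ?_, by simp⟩
      rw [Walk.support_reverse, List.mem_reverse]
      exact this
  obtain ⟨a₁, b₁, a₂, b₂, α₁, α₂, hp₁, hp₂, ha₁, hb₁, ha₂, hb₂, hpr₁, hpr₂, hdj⟩ :=
    IH X {s, u} hIH₁
  obtain ⟨c₁, d₁, c₂, d₂, β₁, β₂, hq₁, hq₂, hc₁, hd₁, hc₂, hd₂, hqr₁, hqr₂, hdjβ⟩ :=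
    IH {s, v} Y hIH₂
  have hb₁b₂ : b₁ ≠ b₂ := by
    intro h
    refine hdj b₁ (Walk.end_mem_support _) ?_
    rw [h]
    exact Walk.end_mem_support _
  have hc₁c₂ : c₁ ≠ c₂ := by
    intro h
    refine hdjβ c₁ (Walk.start_mem_support _) ?_
    rw [h]
    exact Walk.start_mem_support _
  have key₁ : ∃ (as au : W) (αs : (G.deleteEdges {s(u, v)}).Walk as s)
      (αu : (G.deleteEdges {s(u, v)}).Walk au u),
      αs.IsPath ∧ αu.IsPath ∧ as ∈ X ∧ au ∈ X ∧
      (∀ x ∈ αs.support, x ∈ ({s, u} : Set W) → x = s) ∧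
      (∀ x ∈ αu.support, x ∈ ({s, u} : Set W) → x = u) ∧
      (∀ x ∈ αs.support, x ∉ αu.support) := by
    rcases (by simpa using hb₁ : b₁ = s ∨ b₁ = u) with h1 | h1 <;>
      rcases (by simpa using hb₂ : b₂ = s ∨ b₂ = u) with h2 | h2
    · exact absurd (h1.trans h2.symm) hb₁b₂
    · refine ⟨a₁, a₂, α₁.copy rfl h1, α₂.copy rfl h2,
        (Walk.isPath_copy _ _ _).mpr hp₁, (Walk.isPath_copy _ _ _).mpr hp₂, ha₁, ha₂,
        ?_, ?_, ?_⟩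
      · intro x hx hxs
        rw [Walk.support_copy] at hx
        exact ((hpr₁ x hx).2 hxs).trans h1
      · intro x hx hxs
        rw [Walk.support_copy] at hx
        exact ((hpr₂ x hx).2 hxs).trans h2
      · intro x hx hx'
        rw [Walk.support_copy] at hx hx'
        exact hdj x hx hx'
    · refine ⟨a₂, a₁, α₂.copy rfl h2, α₁.copy rfl h1,
        (Walk.isPath_copy _ _ _).mpr hp₂, (Walk.isPath_copy _ _ _).mpr hp₁, ha₂, ha₁,
        ?_, ?_, ?_⟩
      · intro x hx hxs
        rw [Walk.support_copy] at hx
        exact ((hpr₂ x hx).2 hxs).trans h2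
      · intro x hx hxs
        rw [Walk.support_copy] at hx
        exact ((hpr₁ x hx).2 hxs).trans h1
      · intro x hx hx'
        rw [Walk.support_copy] at hx hx'
        exact hdj x hx' hx
    · exact absurd (h1.trans h2.symm) hb₁b₂
  obtain ⟨as, au, αs, αu, hαs, hαu, hasX, hauX, hprs, hpru, hdjα⟩ := key₁
  have key₂ : ∃ (ds dv : W) (βs : (G.deleteEdges {s(u, v)}).Walk s ds)
      (βv : (G.deleteEdges {s(u, v)}).Walk v dv),
      βs.IsPath ∧ βv.IsPath ∧ ds ∈ Y ∧ dv ∈ Y ∧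
      (∀ x ∈ βs.support, x ∈ ({s, v} : Set W) → x = s) ∧
      (∀ x ∈ βv.support, x ∈ ({s, v} : Set W) → x = v) ∧
      (∀ x ∈ βs.support, x ∉ βv.support) := by
    rcases (by simpa using hc₁ : c₁ = s ∨ c₁ = v) with h1 | h1 <;>
      rcases (by simpa using hc₂ : c₂ = s ∨ c₂ = v) with h2 | h2
    · exact absurd (h1.trans h2.symm) hc₁c₂
    · refine ⟨d₁, d₂, β₁.copy h1 rfl, β₂.copy h2 rfl,
        (Walk.isPath_copy _ _ _).mpr hq₁, (Walk.isPath_copy _ _ _).mpr hq₂, hd₁, hd₂,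
        ?_, ?_, ?_⟩
      · intro x hx hxs
        rw [Walk.support_copy] at hx
        exact ((hqr₁ x hx).1 hxs).trans h1
      · intro x hx hxs
        rw [Walk.support_copy] at hx
        exact ((hqr₂ x hx).1 hxs).trans h2
      · intro x hx hx'
        rw [Walk.support_copy] at hx hx'
        exact hdjβ x hx hx'
    · refine ⟨d₂, d₁, β₂.copy h2 rfl, β₁.copy h1 rfl,
        (Walk.isPath_copy _ _ _).mpr hq₂, (Walk.isPath_copy _ _ _).mpr hq₁, hd₂, hd₁,
        ?_, ?_, ?_⟩
      · intro x hx hxs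
        rw [Walk.support_copy] at hx
        exact ((hqr₂ x hx).1 hxs).trans h2
      · intro x hx hxs
        rw [Walk.support_copy] at hx
        exact ((hqr₁ x hx).1 hxs).trans h1
      · intro x hx hx'
        rw [Walk.support_copy] at hx hx'
        exact hdjβ x hx' hx
    · exact absurd (h1.trans h2.symm) hc₁c₂
  obtain ⟨ds, dv, βs, βv, hβs, hβv, hdsY, hdvY, hprbs, hprbv, hdjβ'⟩ := key₂
  have hsαu : s ∉ αu.support := fun h => hsu (hpru s h (by simp))
  have hsβv : s ∉ βv.support := fun h => hsv (hprbv s h (by simp))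
  have crossSV : ∀ x, x ∈ αs.support → x ∈ βv.support → False := by
    intro x hx hy
    have := cross_lemma hSep αs βv hαs hβv hasX hdvY (fun _ => rfl)
      (fun h => absurd h hsβv) hx hy
    exact hsβv (this ▸ hy)
  have crossUS : ∀ x, x ∈ αu.support → x ∈ βs.support → False := by
    intro x hx hy
    have := cross_lemma hSep αu βs hαu hβs hauX hdsY
      (fun h => absurd h hsαu) (fun _ => rfl) hx hy
    exact hsαu (this ▸ hx)
  set As := αs.transfer G (walk_fromDel αs) with hAs
  set Au := αu.transfer G (walk_fromDel αu) with hAu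
  set Bs := βs.transfer G (walk_fromDel βs) with hBs
  set Bv := βv.transfer G (walk_fromDel βv) with hBv
  set W₁ : G.Walk as ds := As.append Bs with hW₁
  set W₂ : G.Walk au dv := Au.append (Walk.cons hadj Bv) with hW₂
  have hW₁sub : ∀ x ∈ W₁.support, x ∈ αs.support ∨ x ∈ βs.support := by
    intro x hx
    rw [hW₁, Walk.mem_support_append_iff, hAs, hBs, Walk.support_transfer,
      Walk.support_transfer] at hx
    exact hx
  have hW₂sub : ∀ x ∈ W₂.support, x ∈ αu.support ∨ x ∈ βv.support := by
    intro x hx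
    rw [hW₂, Walk.mem_support_append_iff, hAu, hBv, Walk.support_transfer,
      Walk.support_cons] at hx
    rcases hx with hx | hx
    · exact Or.inl hx
    · rcases List.mem_cons.mp hx with rfl | hx
      · exact Or.inl (Walk.end_mem_support _)
      · rw [Walk.support_transfer] at hx
        exact Or.inr hx
  have hdisjW : ∀ x ∈ W₁.support, x ∉ W₂.support := by
    intro x hx hx'
    rcases hW₁sub x hx with h1 | h1 <;> rcases hW₂sub x hx' with h2 | h2
    · exact hdjα x h1 h2
    · exact crossSV x h1 h2
    · exact crossUS x h2 h1
    · exact hdjβ' x h1 h2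
  obtain ⟨a', b', W₁', ha', hb', hX₁, hY₁, hsub₁⟩ := exists_trim W₁ hasX hdsY
  obtain ⟨a'', b'', W₂', ha'', hb'', hX₂, hY₂, hsub₂⟩ := exists_trim W₂ hauX hdvY
  refine ⟨a', b', a'', b'', W₁'.bypass, W₂'.bypass, Walk.bypass_isPath _,
    Walk.bypass_isPath _, ha', hb', ha'', hb'', ?_, ?_, ?_⟩
  · intro x hx
    have hx' := Walk.support_bypass_subset _ hx
    exact ⟨hX₁ x hx', hY₁ x hx'⟩
  · intro x hx
    have hx' := Walk.support_bypass_subset _ hx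
    exact ⟨hX₂ x hx', hY₂ x hx'⟩
  · intro x hx hx'
    exact hdisjW x (hsub₁ x (Walk.support_bypass_subset _ hx))
      (hsub₂ x (Walk.support_bypass_subset _ hx'))


lemma menger2 [Finite W] (G : SimpleGraph W) (X Y : Set W) (h : MHyp G X Y) :
    TwoPaths G X Y := by
  classical
  suffices H : ∀ (n : ℕ) (G : SimpleGraph W) (X Y : Set W),
      G.edgeSet.ncard = n → MHyp G X Y → TwoPaths G X Y from H _ G X Y rfl h
  intro n
  induction n using Nat.strong_induction_on with
  | _ n ih =>
  intro G X Y hn h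
  by_cases hE : G.edgeSet = ∅
  · obtain ⟨a, b, w, haX, hbY, -⟩ := h ∅ (by simp)
    have hnil : ∀ {a b : W} (w : G.Walk a b), a = b := by
      intro a b w
      cases w with
      | nil => rfl
      | cons h' w' => exact absurd ((SimpleGraph.mem_edgeSet _).mpr h') (by simp [hE])
    have hab := hnil w
    obtain ⟨a₂, b₂, w₂, haX₂, hbY₂, hav₂⟩ := h {a} (by simp)
    have hab₂ := hnil w₂
    have hsup : ∀ {a b : W} (w : G.Walk a b), w.support = [a] := by
      intro a b w
      cases w with
      | nil => rfl
      | cons h' w' => exact absurd ((SimpleGraph.mem_edgeSet _).mpr h') (by simp [hE])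
    have hane : a₂ ≠ a := by
      have := hav₂ a₂ (Walk.start_mem_support _)
      simpa using this
    subst hab; subst hab₂
    refine ⟨a, a, a₂, a₂, Walk.nil, Walk.nil, Walk.IsPath.nil, Walk.IsPath.nil,
      haX, hbY, haX₂, hbY₂, ?_, ?_, ?_⟩
    · intro x hx
      simp only [Walk.support_nil, List.mem_singleton] at hx
      subst hx; exact ⟨fun _ => rfl, fun _ => rfl⟩
    · intro x hx
      simp only [Walk.support_nil, List.mem_singleton] at hx
      subst hx; exact ⟨fun _ => rfl, fun _ => rfl⟩
    · intro x hx
      simp only [Walk.support_nil, List.mem_singleton] at hx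
      subst hx
      simp only [Walk.support_nil, List.mem_singleton]
      exact hane.symm
  · obtain ⟨e, He⟩ := Set.nonempty_iff_ne_empty.mpr hE
    revert He
    induction e using Sym2.ind with | _ u v => ?_
    intro He
    have hadj : G.Adj u v := (SimpleGraph.mem_edgeSet _).mp He
    have hnpos : 1 ≤ n := by
      rw [← hn]
      exact (Set.ncard_pos (G.edgeSet.toFinite)).mpr ⟨_, He⟩
    have hn1 : (G.deleteEdges {s(u, v)}).edgeSet.ncard = n - 1 := by
      rw [edgeSet_deleteEdges, Set.ncard_diff_singleton_of_mem He, hn]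
    have IH' : ∀ X' Y' : Set W, MHyp (G.deleteEdges {s(u, v)}) X' Y' →
        TwoPaths (G.deleteEdges {s(u, v)}) X' Y' :=
      fun X' Y' hh => ih (n - 1) (by omega) _ X' Y' hn1 hh
    by_cases hyp' : MHyp (G.deleteEdges {s(u, v)}) X Y
    · obtain ⟨a₁, b₁, a₂, b₂, w₁, w₂, hp₁, hp₂, ha₁, hb₁, ha₂, hb₂, hpr₁, hpr₂, hdj⟩ :=
        IH' X Y hyp'
      refine ⟨a₁, b₁, a₂, b₂, w₁.transfer G (walk_fromDel w₁),
        w₂.transfer G (walk_fromDel w₂), hp₁.transfer _, hp₂.transfer _,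
        ha₁, hb₁, ha₂, hb₂, ?_, ?_, ?_⟩ <;>
        simp only [Walk.support_transfer]
      · exact hpr₁
      · exact hpr₂
      · exact hdj
    · rw [MHyp] at hyp'
      push_neg at hyp'
      obtain ⟨S₀, hS₀card, hS₀sep⟩ := hyp'
      have hSep0 : ∀ (a b : W) (w : (G.deleteEdges {s(u, v)}).Walk a b),
          a ∈ X → b ∈ Y → ∃ x ∈ w.support, x ∈ S₀ := hS₀sep
      have hS₀ne : S₀.Nonempty := by
        by_contra hne
        rw [Set.not_nonempty_iff_eq_empty] at hne
        obtain ⟨a, b, w, haX, hbY, hav⟩ := h {u} (by simp)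
        have hu' : u ∉ w.support := fun hh => (hav u hh) rfl
        obtain ⟨x, hx, hxS⟩ := hSep0 a b
          (w.transfer _ (walk_toDel w (not_edge_of_support_left hu'))) haX hbY
        rw [hne] at hxS
        exact hxS
      obtain ⟨s, rfl⟩ : ∃ s, S₀ = {s} := by
        refine Set.ncard_eq_one.mp (le_antisymm hS₀card ?_)
        exact (Set.ncard_pos (S₀.toFinite)).mpr hS₀ne
      have hSep : ∀ (a b : W) (w : (G.deleteEdges {s(u, v)}).Walk a b),
          a ∈ X → b ∈ Y → s ∈ w.support := by
        intro a b w ha hb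
        obtain ⟨x, hx, hxs⟩ := hSep0 a b w ha hb
        rw [Set.mem_singleton_iff] at hxs
        exact hxs ▸ hx
      have hsu : s ≠ u := by
        rintro rfl
        obtain ⟨a, b, w, haX, hbY, hav⟩ := h {s} (by simp)
        have hu' : s ∉ w.support := fun hh => (hav s hh) rfl
        have := hSep a b
          (w.transfer _ (walk_toDel w (not_edge_of_support_left hu'))) haX hbY
        rw [Walk.support_transfer] at this
        exact hu' this
      have hsv : s ≠ v := by
        rintro rfl
        obtain ⟨a, b, w, haX, hbY, hav⟩ := h {s} (by simp)
        have hv' : s ∉ w.support := fun hh => (hav s hh) rfl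
        have hedge : s(u, s) ∉ w.edges :=
          fun he => hv' (w.snd_mem_support_of_mem_edges he)
        have := hSep a b (w.transfer _ (walk_toDel w hedge)) haX hbY
        rw [Walk.support_transfer] at this
        exact hv' this
      obtain ⟨ag, bg, π, hagX, hbgY, hπs⟩ := h {s} (by simp)
      have hπs' : s ∉ π.support := fun hh => (hπs s hh) rfl
      have heπ : s(u, v) ∈ π.edges := by
        by_contra he
        have := hSep ag bg (π.transfer _ (walk_toDel π he)) hagX hbgY
        rw [Walk.support_transfer] at this
        exact hπs' this
      obtain ⟨u₀, ρ₀, hu₀, hρprop, hρsub, -⟩ :=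
        exists_trunc' (S := {u, v}) π ⟨u, π.fst_mem_support_of_mem_edges heπ, by simp⟩
      have hρe : s(u, v) ∉ ρ₀.edges := by
        intro he
        have h1 := hρprop u (ρ₀.fst_mem_support_of_mem_edges he) (by simp)
        have h2 := hρprop v (ρ₀.snd_mem_support_of_mem_edges he) (by simp)
        exact hadj.ne (h1.trans h2.symm)
      have hρs : s ∉ ρ₀.support := fun hh => hπs' (hρsub s hh)
      rcases (by simpa using hu₀ : u₀ = u ∨ u₀ = v) with hceq | hceq
      · exact menger_core G X Y u v s hadj hsu hsv IH' hSep h ag hagX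
          ((ρ₀.copy rfl hceq).transfer _ (walk_toDel _ (by rwa [Walk.edges_copy])))
          (by rw [Walk.support_transfer, Walk.support_copy]; exact hρs)
      · have hswap : ({s(v, u)} : Set (Sym2 W)) = {s(u, v)} := by rw [Sym2.eq_swap]
        refine menger_core G X Y v u s hadj.symm hsv hsu ?_ ?_ h ag hagX
          ((ρ₀.copy rfl hceq).transfer _ ?_) ?_
        · rw [hswap]; exact IH'
        · rw [hswap]; exact hSep
        · rw [hswap]
          exact walk_toDel _ (by rwa [Walk.edges_copy])
        · rw [Walk.support_transfer, Walk.support_copy]; exact hρs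


lemma mem_support_rotate_iff [DecidableEq W] {r w : W} (c : G.Walk r r)
    (h : w ∈ c.support) (x : W) : (x ∈ (c.rotate w h).support) ↔ x ∈ c.support := by
  rw [Walk.rotate, Walk.mem_support_append_iff]
  conv_rhs => rw [← c.take_spec h, Walk.mem_support_append_iff]
  tauto

lemma length_rotate' [DecidableEq W] {r w : W} (c : G.Walk r r) (h : w ∈ c.support) :
    (c.rotate w h).length = c.length := by
  rw [Walk.rotate, Walk.length_append, Nat.add_comm, ← Walk.length_append, Walk.take_spec]

lemma cycle_arcs [DecidableEq W] {r : W} (c : G.Walk r r) (hc : c.IsCycle)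
    {c₂ : W} (hc₂ : c₂ ∈ c.support) (hne : c₂ ≠ r) :
    ∃ (D₁ D₂ : G.Walk r c₂), D₁.IsPath ∧ D₂.IsPath ∧
      (∀ x ∈ D₁.support, x ∈ c.support) ∧ (∀ x ∈ D₂.support, x ∈ c.support) ∧
      (∀ x, x ∈ D₁.support → x ∈ D₂.support → x = r ∨ x = c₂) ∧
      (∀ e ∈ D₁.edges, e ∈ c.edges) ∧ (∀ e ∈ D₂.edges, e ∈ c.edges) ∧
      D₁.length + D₂.length = c.length := by
  cases c with
  | nil => exact absurd rfl hc.ne_nil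
  | @cons r z w h d =>
    have hd : d.IsPath := by
      rw [Walk.isPath_def]
      have := hc.support_nodup
      simpa using this
    have hc₂d : c₂ ∈ d.support := by
      rcases (by simpa using hc₂ : c₂ = r ∨ c₂ ∈ d.support) with rfl | h'
      · exact absurd rfl hne
      · exact h'
    set tk := d.takeUntil c₂ hc₂d with htk
    set dr := d.dropUntil c₂ hc₂d with hdr
    have hspec : tk.append dr = d := Walk.take_spec d hc₂d
    have hnd : (tk.support ++ dr.support.tail).Nodup := by
      rw [← Walk.support_append, hspec]
      exact hd.support_nodup
    have hdisj := List.disjoint_of_nodup_append hnd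
    have hrdr : r ∈ dr.support.tail := by
      have : r ∈ dr.support := Walk.end_mem_support _
      rw [dr.support_eq_cons] at this
      rcases List.mem_cons.mp this with h' | h'
      · exact absurd h'.symm hne
      · exact h'
    have hrtk : r ∉ tk.support := fun hh => hdisj hh hrdr
    refine ⟨Walk.cons h tk, dr.reverse, (hd.takeUntil hc₂d).cons hrtk,
      (hd.dropUntil hc₂d).reverse, ?_, ?_, ?_, ?_, ?_, ?_⟩
    · intro x hx
      rcases (by simpa using hx : x = r ∨ x ∈ tk.support) with rfl | h'
      · simp
      · simp [Walk.support_takeUntil_subset d hc₂d h']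
    · intro x hx
      rw [Walk.support_reverse, List.mem_reverse] at hx
      simp [Walk.support_dropUntil_subset d hc₂d hx]
    · intro x hx hx'
      rw [Walk.support_reverse, List.mem_reverse] at hx'
      rcases (by simpa using hx : x = r ∨ x ∈ tk.support) with rfl | h'
      · exact Or.inl rfl
      · rw [dr.support_eq_cons] at hx'
        rcases List.mem_cons.mp hx' with h'' | h''
        · exact Or.inr h''
        · exact absurd h'' (fun hh => hdisj h' hh)
    · intro e he
      rcases (by simpa using he : e = s(r, z) ∨ e ∈ tk.edges) with rfl | h'
      · simp
      · simp [Walk.edges_takeUntil_subset d hc₂d h']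
    · intro e he
      rw [Walk.edges_reverse, List.mem_reverse] at he
      simp [Walk.edges_dropUntil_subset d hc₂d he]
    · have := congrArg Walk.length hspec
      rw [Walk.length_append] at this
      rw [Walk.length_cons, Walk.length_reverse, Walk.length_cons]
      omega


lemma parity_paths [Finite W] (H : SimpleGraph W) (x y : W) (hxy : x ≠ y)
    (hconn : ∀ S : Set W, S.ncard < 2 → (H.induce Sᶜ).Connected)
    {w : W} (c : H.Walk w w) (hcyc : c.IsCycle) (hodd : Odd c.length)
    (hce : s(x, y) ∉ c.edges) :
    ∃ (r₁ r₂ : H.Walk x y), r₁.IsPath ∧ r₂.IsPath ∧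
      s(x, y) ∉ r₁.edges ∧ s(x, y) ∉ r₂.edges ∧ r₁.length % 2 ≠ r₂.length % 2 := by
  classical
  set T : Set W := {z | z ∈ c.support} with hT
  -- two distinct elements of T
  have hT2 : ∃ t₁ t₂ : W, t₁ ∈ T ∧ t₂ ∈ T ∧ t₁ ≠ t₂ := by
    cases hcc : c with
    | nil => exact absurd rfl (hcc ▸ hcyc).ne_nil
    | @cons a z b hadj d =>
      refine ⟨w, z, by simp [hT, hcc], by simp [hT, hcc], hadj.ne⟩
  obtain ⟨t₁, t₂, ht₁, ht₂, ht₁₂⟩ := hT2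
  -- Menger hypothesis
  have hM : MHyp H ({x, y} : Set W) T := by
    intro S hS
    have hS2 : S.ncard < 2 := by omega
    -- pick a ∈ {x,y} \ S
    have hpickA : ∃ a, a ∈ ({x, y} : Set W) ∧ a ∉ S := by
      by_contra hno
      push_neg at hno
      have hx' := hno x (by simp)
      have hy' := hno y (by simp)
      have : 1 < S.ncard := (Set.one_lt_ncard S.toFinite).mpr ⟨x, hx', y, hy', hxy⟩
      omega
    have hpickT : ∃ t, t ∈ T ∧ t ∉ S := by
      by_contra hno
      push_neg at hno
      have : 1 < S.ncard :=
        (Set.one_lt_ncard S.toFinite).mpr ⟨t₁, hno t₁ ht₁, t₂, hno t₂ ht₂, ht₁₂⟩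
      omega
    obtain ⟨a, haXY, haS⟩ := hpickA
    obtain ⟨t, htT, htS⟩ := hpickT
    have hreach := (hconn S hS2).preconnected ⟨a, haS⟩ ⟨t, htS⟩
    obtain ⟨wk⟩ := hreach
    refine ⟨a, t, wk.map (SimpleGraph.Embedding.induce (Sᶜ : Set W)).toHom, haXY, htT, ?_⟩
    intro z hz
    have hz : z ∈ (wk.map (SimpleGraph.Embedding.induce (Sᶜ : Set W)).toHom).support := hz
    rw [Walk.support_map, List.mem_map] at hz
    obtain ⟨⟨z', hz'⟩, -, rfl⟩ := hz
    exact hz'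
  obtain ⟨a₁, b₁, a₂, b₂, P₀, Q₀, hp₀, hq₀, ha₁, hb₁, ha₂, hb₂, hpr₀, hqr₀, hdj₀⟩ :=
    menger2 H {x, y} T hM
  have ha₁₂ : a₁ ≠ a₂ := by
    intro hh
    refine hdj₀ a₁ (Walk.start_mem_support _) ?_
    rw [hh]; exact Walk.start_mem_support _
  have hb₁₂ : b₁ ≠ b₂ := by
    intro hh
    refine hdj₀ b₁ (Walk.end_mem_support _) ?_
    rw [hh]; exact Walk.end_mem_support _
  -- normalize so P starts at x and Q starts at y
  have key : ∃ (c₁ c₂ : W) (P : H.Walk x c₁) (Q : H.Walk y c₂),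
      P.IsPath ∧ Q.IsPath ∧ c₁ ∈ T ∧ c₂ ∈ T ∧ c₁ ≠ c₂ ∧
      (∀ z ∈ P.support, z ∈ T → z = c₁) ∧ (∀ z ∈ Q.support, z ∈ T → z = c₂) ∧
      (∀ z ∈ P.support, z ∈ ({x, y} : Set W) → z = x) ∧
      (∀ z ∈ Q.support, z ∈ ({x, y} : Set W) → z = y) ∧
      (∀ z ∈ P.support, z ∉ Q.support) := by
    rcases (by simpa using ha₁ : a₁ = x ∨ a₁ = y) with h1 | h1 <;>
      rcases (by simpa using ha₂ : a₂ = x ∨ a₂ = y) with h2 | h2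
    · exact absurd (h1.trans h2.symm) ha₁₂
    · refine ⟨b₁, b₂, P₀.copy h1 rfl, Q₀.copy h2 rfl, (Walk.isPath_copy _ _ _).mpr hp₀,
        (Walk.isPath_copy _ _ _).mpr hq₀, hb₁, hb₂, hb₁₂, ?_, ?_, ?_, ?_, ?_⟩ <;>
        intro z hz <;> rw [Walk.support_copy] at hz
      · exact (hpr₀ z hz).2
      · exact (hqr₀ z hz).2
      · exact fun hmem => ((hpr₀ z hz).1 hmem).trans h1
      · exact fun hmem => ((hqr₀ z hz).1 hmem).trans h2
      · intro hz'
        rw [Walk.support_copy] at hz'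
        exact hdj₀ z hz hz'
    · refine ⟨b₂, b₁, Q₀.copy h2 rfl, P₀.copy h1 rfl, (Walk.isPath_copy _ _ _).mpr hq₀,
        (Walk.isPath_copy _ _ _).mpr hp₀, hb₂, hb₁, hb₁₂.symm, ?_, ?_, ?_, ?_, ?_⟩ <;>
        intro z hz <;> rw [Walk.support_copy] at hz
      · exact (hqr₀ z hz).2
      · exact (hpr₀ z hz).2
      · exact fun hmem => ((hqr₀ z hz).1 hmem).trans h2
      · exact fun hmem => ((hpr₀ z hz).1 hmem).trans h1
      · intro hz'
        rw [Walk.support_copy] at hz'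
        exact hdj₀ z hz' hz
    · exact absurd (h1.trans h2.symm) ha₁₂
  obtain ⟨c₁, c₂, P, Q, hP, hQ, hc₁T, hc₂T, hc₁₂, hPT, hQT, hPX, hQX, hPQ⟩ := key
  -- rotate the cycle to c₁ and split at c₂
  have hc₁mem : c₁ ∈ c.support := hc₁T
  set crot := c.rotate c₁ hc₁mem with hcrot
  have hcycrot : crot.IsCycle := hcyc.rotate hc₁mem
  have hc₂mem : c₂ ∈ crot.support := by
    rw [_root_.mem_support_rotate_iff]
    exact hc₂T
  obtain ⟨D₁, D₂, hD₁, hD₂, hD₁T, hD₂T, hD₁₂, hD₁e, hD₂e, hDlen⟩ :=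
    cycle_arcs crot hcycrot hc₂mem hc₁₂.symm
  have hDT : ∀ z, (z ∈ D₁.support ∨ z ∈ D₂.support) → z ∈ T := by
    intro z hz
    have : z ∈ crot.support := by rcases hz with h | h; exacts [hD₁T z h, hD₂T z h]
    rw [_root_.mem_support_rotate_iff] at this
    exact this
  have hDe : ∀ e, (e ∈ D₁.edges ∨ e ∈ D₂.edges) → e ∈ c.edges := by
    intro e he
    have : e ∈ crot.edges := by rcases he with h | h; exacts [hD₁e e h, hD₂e e h]
    exact (Walk.rotate_edges c c₁ hc₁mem).perm.mem_iff.mp this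
  have hyP : y ∉ P.support := fun hh => hxy (hPX y hh (by simp)).symm
  have hxQ : x ∉ Q.support := fun hh => hxy (hQX x hh (by simp))
  -- build the two x-y paths
  have build : ∀ (D : H.Walk c₁ c₂), D.IsPath →
      (∀ z ∈ D.support, z ∈ T) → (∀ e ∈ D.edges, e ∈ c.edges) →
      (P.append (D.append Q.reverse)).IsPath ∧
      s(x, y) ∉ (P.append (D.append Q.reverse)).edges := by
    intro D hD hDT' hDe'
    constructor
    · rw [Walk.isPath_def, Walk.support_append, Walk.tail_support_append]
      have h1 : P.support.Nodup := hP.support_nodup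
      have h2 : D.support.tail.Nodup := hD.support_nodup.tail
      have h3 : Q.reverse.support.tail.Nodup := hQ.reverse.support_nodup.tail
      refine List.Nodup.append h1 (List.Nodup.append h2 h3 ?_) ?_
      · -- D.tail vs Q.rev.tail
        intro z hz hz'
        have hzD : z ∈ D.support := List.mem_of_mem_tail hz
        have hzQ : z ∈ Q.support := by
          have := List.mem_of_mem_tail hz'
          rw [Walk.support_reverse, List.mem_reverse] at this
          exact this
        have : z = c₂ := hQT z hzQ (hDT' z hzD)
        subst this
        have : z ∉ Q.reverse.support.tail := by
          have hnd := hQ.reverse.support_nodup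
          rw [Q.reverse.support_eq_cons] at hnd
          exact (List.nodup_cons.mp hnd).1
        exact this hz'
      · -- P vs (D.tail ++ Q.rev.tail)
        intro z hz hz'
        rcases List.mem_append.mp hz' with h' | h'
        · have hzD : z ∈ D.support := List.mem_of_mem_tail h'
          have : z = c₁ := hPT z hz (hDT' z hzD)
          subst this
          have : z ∉ D.support.tail := by
            have hnd := hD.support_nodup
            rw [D.support_eq_cons] at hnd
            exact (List.nodup_cons.mp hnd).1
          exact this h'
        · have hzQ : z ∈ Q.support := by
            have := List.mem_of_mem_tail h'
            rw [Walk.support_reverse, List.mem_reverse] at this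
            exact this
          exact hPQ z hz hzQ
    · rw [Walk.edges_append, Walk.edges_append]
      intro hmem
      rcases List.mem_append.mp hmem with h' | h'
      · exact hyP (P.snd_mem_support_of_mem_edges h')
      · rcases List.mem_append.mp h' with h'' | h''
        · exact hce (hDe' _ h'')
        · rw [Walk.edges_reverse, List.mem_reverse] at h''
          exact hxQ (Q.fst_mem_support_of_mem_edges h'')
  obtain ⟨hr₁, hr₁e⟩ := build D₁ hD₁ (fun z hz => hDT z (Or.inl hz)) (fun e he => hDe e (Or.inl he))
  obtain ⟨hr₂, hr₂e⟩ := build D₂ hD₂ (fun z hz => hDT z (Or.inr hz)) (fun e he => hDe e (Or.inr he))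
  refine ⟨P.append (D₁.append Q.reverse), P.append (D₂.append Q.reverse),
    hr₁, hr₂, hr₁e, hr₂e, ?_⟩
  have hclen : crot.length = c.length := length_rotate' c hc₁mem
  have hco : Odd c.length := hodd
  rw [Nat.odd_iff] at hco
  simp only [Walk.length_append, Walk.length_reverse]
  omega


end Aux

/-- Let `G` be 2-connected with a 2-cut `{x,y}` separating `V ∖ {x,y}` into nonempty
parts `A` and `B` with no edges between them. If the part `H₁` (on `A ∪ {x,y}`) minus
the edge `xy` contains two `x`–`y` paths whose lengths differ by 2, and the part `H₂`
(on `B ∪ {x,y}`) minus `xy` is non-bipartite and becomes 2-connected after adding `xy`,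
then `G` contains two cycles of consecutive even lengths. -/
theorem stmt_18 {V : Type*} [Fintype V] (G : SimpleGraph V) (x y : V) (hxy : x ≠ y)
    (h2 : KConnected 2 G)
    (A B : Set V) (hA : A.Nonempty) (hB : B.Nonempty) (hAB : Disjoint A B)
    (hxA : x ∉ A ∪ B) (hyA : y ∉ A ∪ B)
    (hcover : A ∪ B ∪ {x, y} = Set.univ)
    (hsep : ∀ a ∈ A, ∀ b ∈ B, ¬ G.Adj a b)
    (hpaths : ∃ p q : G.Walk x y, p.IsPath ∧ q.IsPath ∧
      (∀ v ∈ p.support, v ∈ A ∪ {x, y}) ∧ (∀ v ∈ q.support, v ∈ A ∪ {x, y}) ∧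
      s(x, y) ∉ p.edges ∧ s(x, y) ∉ q.edges ∧ q.length = p.length + 2)
    (hnonbip : ¬ ((G.deleteEdges {s(x, y)}).induce (B ∪ {x, y})).Colorable 2)
    (h2conn : KConnected 2 ((G ⊔ fromEdgeSet {s(x, y)}).induce (B ∪ {x, y}))) :
    HasTwoConsecEvenCycles G := by
  classical
  set S : Set V := B ∪ {x, y} with hS
  have hxS : x ∈ S := Or.inr (by simp)
  have hyS : y ∈ S := Or.inr (by simp)
  set x' : ↥S := ⟨x, hxS⟩ with hx'
  set y' : ↥S := ⟨y, hyS⟩ with hy'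
  have hxy' : x' ≠ y' := fun h => hxy (congrArg Subtype.val h)
  set H : SimpleGraph ↥S := (G ⊔ fromEdgeSet {s(x, y)}).induce S with hH
  set K' : SimpleGraph ↥S := (G.deleteEdges {s(x, y)}).induce S with hK'
  have hcoe : ∀ a b : ↥S, s(a, b) = s(x', y') ↔ s((a : V), (b : V)) = s(x, y) := by
    intro a b
    rw [Sym2.eq_iff, Sym2.eq_iff]
    constructor
    · rintro (⟨rfl, rfl⟩ | ⟨rfl, rfl⟩)
      · left; exact ⟨rfl, rfl⟩
      · right; exact ⟨rfl, rfl⟩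
    · rintro (⟨h1, h2⟩ | ⟨h1, h2⟩)
      · left; exact ⟨Subtype.ext h1, Subtype.ext h2⟩
      · right; exact ⟨Subtype.ext h1, Subtype.ext h2⟩
  have hHK : H.deleteEdges {s(x', y')} = K' := by
    ext a b
    simp only [hH, hK', deleteEdges_adj, comap_adj, Function.Embedding.coe_subtype,
      sup_adj, fromEdgeSet_adj, Set.mem_singleton_iff, hcoe a b]
    constructor
    · rintro ⟨hadj | ⟨he, hne⟩, hnot⟩
      · exact ⟨hadj, hnot⟩
      · exact absurd he hnot
    · rintro ⟨hadj, hnot⟩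
      exact ⟨Or.inl hadj, hnot⟩
  have hnonbip' : ¬ (H.deleteEdges {s(x', y')}).Colorable 2 := by
    rw [hHK]
    exact hnonbip
  obtain ⟨w, c₀, hc₀cyc, hc₀odd⟩ := exists_odd_cycle hnonbip'
  set c : H.Walk w w := c₀.transfer H (walk_fromDel c₀) with hc
  have hccyc : c.IsCycle := hc₀cyc.transfer _
  have hclen : c.length = c₀.length := Walk.length_transfer _ _
  have hcodd : Odd c.length := by rw [hclen]; exact hc₀odd
  have hce : s(x', y') ∉ c.edges := by
    rw [hc, Walk.edges_transfer]
    intro he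
    have := c₀.edges_subset_edgeSet he
    rw [edgeSet_deleteEdges] at this
    exact this.2 rfl
  obtain ⟨r₁, r₂, hr₁p, hr₂p, hr₁e, hr₂e, hrpar⟩ :=
    parity_paths H x' y' hxy' h2conn.2 c hccyc hcodd hce
  obtain ⟨p, q, hpp, hqp, hpsup, hqsup, hpe, hqe, hpqlen⟩ := hpaths
  -- choose the path with matching parity
  have hchoose : ∃ r : H.Walk x' y', r.IsPath ∧ s(x', y') ∉ r.edges ∧
      r.length % 2 = p.length % 2 := by
    by_cases hpar : r₁.length % 2 = p.length % 2
    · exact ⟨r₁, hr₁p, hr₁e, hpar⟩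
    · exact ⟨r₂, hr₂p, hr₂e, by omega⟩
  obtain ⟨r, hrp, hre, hrpar2⟩ := hchoose
  -- transport r to a path of G
  set rdel := r.transfer (H.deleteEdges {s(x', y')}) (walk_toDel r hre) with hrdel
  set rK : K'.Walk x' y' := rdel.transfer K'
    (by rw [← hHK]; exact fun e he => rdel.edges_subset_edgeSet he) with hrK
  have hrKp : rK.IsPath := ((hrp.transfer _).transfer _)
  have hrKlen : rK.length = r.length := by
    rw [hrK, Walk.length_transfer, hrdel, Walk.length_transfer]
  set emb : K' ↪g G.deleteEdges {s(x, y)} :=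
    SimpleGraph.Embedding.induce (G := G.deleteEdges {s(x, y)}) S with hemb
  set rV : (G.deleteEdges {s(x, y)}).Walk x y := rK.map emb.toHom with hrV
  have hrVp : rV.IsPath := by
    rw [hrV]
    exact Walk.map_isPath_of_injective emb.injective hrKp
  have hrVsup : ∀ v ∈ rV.support, v ∈ S := by
    intro v hv
    have hv : v ∈ (rK.map emb.toHom).support := hv
    rw [Walk.support_map, List.mem_map] at hv
    obtain ⟨⟨v', hv'⟩, -, rfl⟩ := hv
    exact hv'
  have hrVlen : rV.length = r.length := by
    have : rV.length = (rK.map emb.toHom).length := rfl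
    rw [this, Walk.length_map, hrKlen]
  set rG : G.Walk x y := rV.transfer G (walk_fromDel rV) with hrG
  have hrGp : rG.IsPath := hrVp.transfer _
  have hrGsup : ∀ v ∈ rG.support, v ∈ S := by
    intro v hv
    rw [hrG, Walk.support_transfer] at hv
    exact hrVsup v hv
  have hrGlen : rG.length = r.length := by rw [hrG, Walk.length_transfer, hrVlen]
  have hrGe : s(x, y) ∉ rG.edges := by
    rw [hrG, Walk.edges_transfer]
    intro he
    have := rV.edges_subset_edgeSet he
    rw [edgeSet_deleteEdges] at this
    exact this.2 rfl
  -- gluing conditions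
  have hmeet : ∀ v, v ∈ A ∪ {x, y} → v ∈ S → v = x ∨ v = y := by
    intro v hv hv'
    rcases hv with hvA | hvxy
    · rcases hv' with hvB | hvxy'
      · exact absurd hvB (Set.disjoint_left.mp hAB hvA)
      · simpa using hvxy'
    · simpa using hvxy
  have hedge : ∀ (pw : G.Walk x y), (∀ v ∈ pw.support, v ∈ A ∪ {x, y}) →
      s(x, y) ∉ pw.edges → ∀ e ∈ pw.edges, e ∉ rG.edges := by
    intro pw hpwsup hpwe e he hre'
    revert he hre'
    induction e using Sym2.ind with | _ a b => ?_
    intro he hre'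
    have hadj : G.Adj a b := (SimpleGraph.mem_edgeSet _).mp (pw.edges_subset_edgeSet he)
    have haP : a ∈ pw.support := pw.fst_mem_support_of_mem_edges he
    have hbP : b ∈ pw.support := pw.snd_mem_support_of_mem_edges he
    have haR : a ∈ rG.support := rG.fst_mem_support_of_mem_edges hre'
    have hbR : b ∈ rG.support := rG.snd_mem_support_of_mem_edges hre'
    have ha : a = x ∨ a = y := hmeet a (hpwsup a haP) (hrGsup a haR)
    have hb : b = x ∨ b = y := hmeet b (hpwsup b hbP) (hrGsup b hbR)
    rcases ha with rfl | rfl <;> rcases hb with rfl | rfl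
    · exact hadj.ne rfl
    · exact hpwe he
    · exact hpwe (by rwa [Sym2.eq_swap] at he)
    · exact hadj.ne rfl
  have hsup1 : ∀ v, v ∈ p.support → v ∈ rG.support → v = x ∨ v = y :=
    fun v hv hv' => hmeet v (hpsup v hv) (hrGsup v hv')
  have hsup2 : ∀ v, v ∈ q.support → v ∈ rG.support → v = x ∨ v = y :=
    fun v hv hv' => hmeet v (hqsup v hv) (hrGsup v hv')
  have hC₁ : (p.append rG.reverse).IsCycle :=
    glue_cycle p rG hpp hrGp hxy hsup1 (hedge p hpsup hpe)
  have hC₂ : (q.append rG.reverse).IsCycle :=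
    glue_cycle q rG hqp hrGp hxy hsup2 (hedge q hqsup hqe)
  have hC₁len : (p.append rG.reverse).length = p.length + rG.length := by
    rw [Walk.length_append, Walk.length_reverse]
  have hC₂len : (q.append rG.reverse).length = q.length + rG.length := by
    rw [Walk.length_append, Walk.length_reverse]
  have h3 := hC₁.three_le_length
  have heven : (p.length + rG.length) % 2 = 0 := by omega
  refine ⟨x, x, p.append rG.reverse, q.append rG.reverse, (p.length + rG.length) / 2,
    hC₁, hC₂, by omega, by omega, by omega⟩
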